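/- Products of stars formula: let k, r, a_1, …, a_k ∈ ℤ⁺, set G_0 = K_1 and G_i = S_{a_1}□⋯□S_{a_i}. Then m_e(G_k, r) = m_e(G_{k−1}, r) + a_k·m_e(G_{k−1}, r−1) + Σ_{t=1}^{a_k−1} t·d_{r−t} + a_k·Σ_{t=a_k}^{r} d_{r−t}, where d_i is the number of vertices of degree i in G_{k−1}. -/

import Mathlib

open Polynomial

namespace BondPerc

open Classical

set_option maxHeartbeats 1000000

/-- The set of edges eventually infected in `r`-bond bootstrap percolation on `G`
starting from the initially infected set `S`. -/
inductive Infected {V : Type*} (G : SimpleGraph V) (r : ℕ) (S : Set (Sym2 V)) : Sym2 V → Prop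
  | init {e : Sym2 V} (he : e ∈ S) : Infected G r S e
  | step {e : Sym2 V} (he : e ∈ G.edgeSet) (v : V) (hv : v ∈ e)
      (T : Finset (Sym2 V)) (hT : r ≤ T.card)
      (hT1 : ∀ f ∈ T, f ∈ G.edgeSet) (hT2 : ∀ f ∈ T, v ∈ f)
      (hT3 : ∀ f ∈ T, Infected G r S f) : Infected G r S e

/-- `S` percolates in `r`-bond bootstrap percolation on `G`. -/
def Percolates {V : Type*} (G : SimpleGraph V) (r : ℕ) (S : Set (Sym2 V)) : Prop :=
  S ⊆ G.edgeSet ∧ ∀ e ∈ G.edgeSet, Infected G r S e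

/-- `m_e(G,r)`: the minimum size of an `r`-percolating set of edges of `G`. -/
noncomputable def me {V : Type*} (G : SimpleGraph V) (r : ℕ) : ℕ :=
  sInf {n | ∃ S : Set (Sym2 V), S.Finite ∧ Percolates G r S ∧ S.ncard = n}

/-- `c` is a proper edge-colouring of `G`: edges sharing a vertex get distinct colours. -/
def IsProperEdgeColoring {V : Type*} (G : SimpleGraph V) (c : Sym2 V → ℝ) : Prop :=
  ∀ e ∈ G.edgeSet, ∀ f ∈ G.edgeSet, e ≠ f → (∃ v, v ∈ e ∧ v ∈ f) → c e ≠ c f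

set_option maxHeartbeats 1000000 in
/-- The vector space `W^r_{G,c}` of tuples of polynomials `(p_v)` with
`deg p_v ≤ min(r, deg v) - 1` and `p_u(c(uv)) = p_v(c(uv))` for every edge `uv`. -/
noncomputable def Wspace {V : Type*} [Fintype V] (G : SimpleGraph V) (r : ℕ)
    (c : Sym2 V → ℝ) : Submodule ℝ (V → Polynomial ℝ) where
  carrier := {p | (∀ v, (p v).degree < (min r (G.degree v) : ℕ)) ∧
    ∀ u v, G.Adj u v → (p u).eval (c s(u, v)) = (p v).eval (c s(u, v))}
  add_mem' := by
    rintro p q ⟨hp1, hp2⟩ ⟨hq1, hq2⟩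
    refine ⟨fun v => lt_of_le_of_lt (degree_add_le _ _) (max_lt (hp1 v) (hq1 v)), ?_⟩
    intro u v huv
    simp only [Pi.add_apply, eval_add, hp2 u v huv, hq2 u v huv]
  zero_mem' := by
    refine ⟨fun v => ?_, fun u v h => by simp⟩
    simp only [Pi.zero_apply, degree_zero]
    exact WithBot.bot_lt_coe _
  smul_mem' := by
    rintro a p ⟨hp1, hp2⟩
    refine ⟨fun v => lt_of_le_of_lt (degree_smul_le a (p v)) (hp1 v), ?_⟩
    intro u v huv
    simp only [Pi.smul_apply, Polynomial.eval_smul, hp2 u v huv]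

/-- `dim W^r_{G,c}`. -/
noncomputable def Wdim {V : Type*} [Fintype V] (G : SimpleGraph V) (r : ℕ)
    (c : Sym2 V → ℝ) : ℕ :=
  Module.finrank ℝ (Wspace G r c)

/-- `d^G_i`, the number of vertices of `G` of degree `i` (indexed by `ℤ`, zero for `i < 0`). -/
noncomputable def dcount {V : Type*} [Fintype V] (G : SimpleGraph V) (i : ℤ) : ℕ :=
  Nat.card {v : V // (G.degree v : ℤ) = i}

/-- The star `S_k` with centre `0` and `k` leaves. -/
def starGraph (k : ℕ) : SimpleGraph (Fin (k + 1)) :=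
  SimpleGraph.fromRel fun i _ => i = 0

/-- The theta graph `H_{k,ℓ}`: two hub vertices joined by three internally disjoint
paths of lengths `1`, `ℓ - 1` and `k - 1`. -/
def thetaGraph (k l : ℕ) : SimpleGraph (Fin 2 ⊕ Fin (l - 2) ⊕ Fin (k - 2)) :=
  SimpleGraph.fromRel fun x y =>
    (x = Sum.inl 0 ∧ y = Sum.inl 1) ∨
    (x = Sum.inl 0 ∧ ∃ j : Fin (l - 2), y = Sum.inr (Sum.inl j) ∧ j.val = 0) ∨
    (∃ i j : Fin (l - 2), x = Sum.inr (Sum.inl i) ∧ y = Sum.inr (Sum.inl j) ∧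
      j.val = i.val + 1) ∨
    (∃ i : Fin (l - 2), x = Sum.inr (Sum.inl i) ∧ i.val = l - 3 ∧ y = Sum.inl 1) ∨
    (x = Sum.inl 0 ∧ ∃ j : Fin (k - 2), y = Sum.inr (Sum.inr j) ∧ j.val = 0) ∨
    (∃ i j : Fin (k - 2), x = Sum.inr (Sum.inr i) ∧ y = Sum.inr (Sum.inr j) ∧
      j.val = i.val + 1) ∨
    (∃ i : Fin (k - 2), x = Sum.inr (Sum.inr i) ∧ i.val = k - 3 ∧ y = Sum.inl 1)


/-- The iterated Cartesian product of stars `S_{a_1} □ ⋯ □ S_{a_k}`, built from a list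
(head is the last factor); the empty product is `K_1`. -/
def starProd : List ℕ → (V : Type) × SimpleGraph V
  | [] => ⟨PUnit, ⊥⟩
  | a :: l => ⟨(starProd l).1 × Fin (a + 1), (starProd l).2 □ starGraph a⟩

instance starProdFintype : (l : List ℕ) → Fintype (starProd l).1
  | [] => inferInstanceAs (Fintype PUnit)
  | a :: l => letI := starProdFintype l
      inferInstanceAs (Fintype ((starProd l).1 × Fin (a + 1)))

/-! ### Basic lemmas about `Infected` and `me` -/

section Basic

variable {V : Type*} {G : SimpleGraph V} {r : ℕ} {S S' : Set (Sym2 V)}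

theorem Infected.mono (hSS : S ⊆ S') {e : Sym2 V} (h : Infected G r S e) :
    Infected G r S' e := by
  induction h with
  | init he => exact .init (hSS he)
  | step he v hv T hT hT1 hT2 hT3 ih => exact .step he v hv T hT hT1 hT2 ih

theorem Infected.trans (hS' : ∀ f ∈ S', Infected G r S f) {e : Sym2 V}
    (h : Infected G r S' e) : Infected G r S e := by
  induction h with
  | init he => exact hS' _ he
  | step he v hv T hT hT1 hT2 hT3 ih => exact .step he v hv T hT hT1 hT2 ih

theorem me_le_ncard (hfin : S.Finite) (hperc : Percolates G r S) :
    me G r ≤ S.ncard :=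
  Nat.sInf_le ⟨S, hfin, hperc, rfl⟩

theorem percolates_edgeSet : Percolates G r G.edgeSet :=
  ⟨subset_rfl, fun _ he => .init he⟩

theorem exists_me_set [Finite V] (G : SimpleGraph V) (r : ℕ) :
    ∃ S : Set (Sym2 V), S.Finite ∧ Percolates G r S ∧ S.ncard = me G r := by
  have h : {n | ∃ S : Set (Sym2 V), S.Finite ∧ Percolates G r S ∧ S.ncard = n}.Nonempty :=
    ⟨_, G.edgeSet, Set.toFinite _, percolates_edgeSet, rfl⟩
  exact Nat.sInf_mem h

theorem me_zero (G : SimpleGraph V) : me G 0 = 0 := by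
  have h0 : (0 : ℕ) ∈ {n | ∃ S : Set (Sym2 V), S.Finite ∧ Percolates G 0 S ∧ S.ncard = n} := by
    refine ⟨∅, Set.finite_empty, ⟨Set.empty_subset _, fun e he => ?_⟩, Set.ncard_empty _⟩
    exact .step he e.out.1 (Sym2.out_fst_mem e) ∅ (by simp) (by simp) (by simp) (by simp)
  exact Nat.le_zero.mp (Nat.sInf_le h0)

theorem me_bot (r : ℕ) : me (⊥ : SimpleGraph V) r = 0 := by
  have h0 : (0 : ℕ) ∈ {n | ∃ S : Set (Sym2 V), S.Finite ∧
      Percolates (⊥ : SimpleGraph V) r S ∧ S.ncard = n} := by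
    refine ⟨∅, Set.finite_empty, ⟨Set.empty_subset _, fun e he => ?_⟩, Set.ncard_empty _⟩
    simp at he
  exact Nat.le_zero.mp (Nat.sInf_le h0)

end Basic

/-! ### The polynomial lower bound -/

section L1

variable {V : Type*} [Fintype V] {G : SimpleGraph V} {r : ℕ} {c : Sym2 V → ℝ}

theorem eval_other {p : V → Polynomial ℝ} (hp : p ∈ Wspace G r c) {e : Sym2 V} {v : V}
    (he : e ∈ G.edgeSet) (hv : v ∈ e) (hval : (p v).eval (c e) = 0) :
    ∀ w ∈ e, (p w).eval (c e) = 0 := by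
  have hspec := Sym2.other_spec hv
  have hadj : G.Adj v (Sym2.Mem.other hv) := by
    rw [← SimpleGraph.mem_edgeSet, hspec]; exact he
  have hcon := hp.2 v (Sym2.Mem.other hv) hadj
  rw [hspec] at hcon
  intro w hw
  rw [← hspec] at hw
  rcases Sym2.mem_iff.mp hw with rfl | rfl
  · exact hval
  · rw [← hcon]; exact hval

theorem vanish_of_infected (hc : IsProperEdgeColoring G c) {p : V → Polynomial ℝ}
    (hp : p ∈ Wspace G r c) {S : Set (Sym2 V)} (hSE : S ⊆ G.edgeSet)
    (h0 : ∀ e ∈ S, ∃ v ∈ e, (p v).eval (c e) = 0)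
    {e : Sym2 V} (he : Infected G r S e) : ∀ v ∈ e, (p v).eval (c e) = 0 := by
  induction he with
  | init h =>
    obtain ⟨v, hv, hval⟩ := h0 _ h
    exact eval_other hp (hSE h) hv hval
  | step he v hv T hT hT1 hT2 hT3 ih =>
    have hpv : p v = 0 := by
      by_cases hz : p v = 0
      · exact hz
      apply Polynomial.eq_zero_of_natDegree_lt_card_of_eval_eq_zero' (p v) (T.image c)
      · intro i hi
        obtain ⟨f, hf, rfl⟩ := Finset.mem_image.mp hi
        exact ih f hf v (hT2 f hf)
      · have hcard : (T.image c).card = T.card := by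
          apply Finset.card_image_of_injOn
          intro f hf g hg hfg
          by_contra hne
          exact hc f (hT1 f hf) g (hT1 g hg) hne ⟨v, hT2 f hf, hT2 g hg⟩ hfg
        rw [hcard]
        have hdeg := hp.1 v
        rw [Polynomial.degree_eq_natDegree hz, Nat.cast_lt] at hdeg
        exact lt_of_lt_of_le (lt_of_lt_of_le hdeg (min_le_left _ _)) hT
    exact eval_other hp he hv (by rw [hpv]; simp)

theorem wspace_eq_zero_of_percolates (hc : IsProperEdgeColoring G c)
    {p : V → Polynomial ℝ} (hp : p ∈ Wspace G r c) {S : Set (Sym2 V)}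
    (hperc : Percolates G r S)
    (h0 : ∀ e ∈ S, ∃ v ∈ e, (p v).eval (c e) = 0) : p = 0 := by
  classical
  funext v
  by_cases hz : p v = 0
  · exact hz
  apply Polynomial.eq_zero_of_natDegree_lt_card_of_eval_eq_zero' (p v)
      ((G.incidenceFinset v).image c)
  · intro i hi
    obtain ⟨f, hf, rfl⟩ := Finset.mem_image.mp hi
    rw [SimpleGraph.mem_incidenceFinset] at hf
    exact vanish_of_infected hc hp hperc.1 h0 (hperc.2 f hf.1) v hf.2
  · have hcard : ((G.incidenceFinset v).image c).card = G.degree v := by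
      rw [Finset.card_image_of_injOn, SimpleGraph.card_incidenceFinset_eq_degree]
      intro f hf g hg hfg
      by_contra hne
      simp only [Finset.mem_coe, SimpleGraph.mem_incidenceFinset] at hf hg
      exact hc f hf.1 g hg.1 hne ⟨v, hf.2, hg.2⟩ hfg
    rw [hcard]
    have hdeg := hp.1 v
    rw [Polynomial.degree_eq_natDegree hz, Nat.cast_lt] at hdeg
    exact lt_of_lt_of_le hdeg (min_le_right _ _)

theorem wdim_le_of_percolates (hc : IsProperEdgeColoring G c) {S : Set (Sym2 V)}
    (hfin : S.Finite) (hperc : Percolates G r S) : Wdim G r c ≤ S.ncard := by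
  classical
  let F := hfin.toFinset
  let ev : Wspace G r c →ₗ[ℝ] (F → ℝ) :=
    { toFun := fun p e => ((p : V → Polynomial ℝ) (e : Sym2 V).out.1).eval (c e)
      map_add' := fun p q => by funext e; simp
      map_smul' := fun a p => by funext e; simp }
  have hinj : Function.Injective ev := by
    rw [← LinearMap.ker_eq_bot, LinearMap.ker_eq_bot']
    intro p hp0
    have hzero : (p : V → Polynomial ℝ) = 0 := by
      apply wspace_eq_zero_of_percolates hc p.2 hperc
      intro e heS
      refine ⟨e.out.1, Sym2.out_fst_mem e, ?_⟩
      have := congrFun hp0 ⟨e, hfin.mem_toFinset.mpr heS⟩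
      exact this
    exact Subtype.ext hzero
  calc Wdim G r c ≤ Module.finrank ℝ (F → ℝ) :=
        LinearMap.finrank_le_finrank_of_injective hinj
    _ = Fintype.card F := Module.finrank_pi ℝ
    _ = F.card := Fintype.card_coe F
    _ = S.ncard := (Set.ncard_eq_toFinset_card S hfin).symm

theorem wdim_le_me (hc : IsProperEdgeColoring G c) : Wdim G r c ≤ me G r := by
  obtain ⟨S, hfin, hperc, hcard⟩ := exists_me_set G r
  rw [← hcard]
  exact wdim_le_of_percolates hc hfin hperc

end L1
/-! ### Finite dimensionality of `Wspace` -/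

section FinDim

variable {V : Type*} [Fintype V] (G : SimpleGraph V) (r : ℕ) (c : Sym2 V → ℝ)

noncomputable instance (n : ℕ) : FiniteDimensional ℝ (Polynomial.degreeLT ℝ n) :=
  LinearEquiv.finiteDimensional (Polynomial.degreeLTEquiv ℝ n).symm

theorem finrank_degreeLT (n : ℕ) :
    Module.finrank ℝ (Polynomial.degreeLT ℝ n) = n := by
  rw [LinearEquiv.finrank_eq (Polynomial.degreeLTEquiv ℝ n), Module.finrank_pi]
  simp

noncomputable def restrictW :
    Wspace G r c →ₗ[ℝ] (Π v : V, Polynomial.degreeLT ℝ (min r (G.degree v))) where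
  toFun := fun p v => ⟨(p : V → Polynomial ℝ) v, Polynomial.mem_degreeLT.mpr (p.2.1 v)⟩
  map_add' := fun p q => by funext v; ext; simp
  map_smul' := fun a p => by funext v; ext; simp

instance : FiniteDimensional ℝ (Wspace G r c) := by
  have hinj : Function.Injective (restrictW G r c) := by
    intro p q h
    apply Subtype.ext; funext v
    exact congrArg Subtype.val (congrFun h v)
  exact FiniteDimensional.of_injective (restrictW G r c) hinj

theorem degree_eq_zero_of_lt_zero {p : Polynomial ℝ} (h : p.degree < (0 : ℕ)) : p = 0 := by
  rw [Polynomial.degree_eq_bot.symm]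
  exact Nat.WithBot.lt_zero_iff.mp (by exact_mod_cast h)

theorem bot_degree'' {W : Type*} (v : W) [inst : Fintype ((⊥ : SimpleGraph W).neighborSet v)] :
    (⊥ : SimpleGraph W).degree v = 0 := by
  rw [SimpleGraph.degree, Finset.card_eq_zero]
  ext w
  simp [SimpleGraph.mem_neighborFinset]

theorem wspace_bot (r : ℕ) (c : Sym2 V → ℝ) : Wspace (⊥ : SimpleGraph V) r c = ⊥ := by
  rw [eq_bot_iff]
  intro p hp
  have h : (p : V → Polynomial ℝ) = 0 := by
    funext v
    have hd := hp.1 v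
    rw [bot_degree'', Nat.min_zero] at hd
    exact degree_eq_zero_of_lt_zero hd
  simpa [Submodule.mem_bot] using h

theorem wdim_bot (r : ℕ) (c : Sym2 V → ℝ) : Wdim (⊥ : SimpleGraph V) r c = 0 := by
  rw [Wdim, wspace_bot, finrank_bot]

theorem wspace_zero (c : Sym2 V → ℝ) : Wspace G 0 c = ⊥ := by
  rw [eq_bot_iff]
  intro p hp
  have h : (p : V → Polynomial ℝ) = 0 := by
    funext v
    have hd := hp.1 v
    rw [Nat.zero_min] at hd
    exact degree_eq_zero_of_lt_zero hd
  simpa [Submodule.mem_bot] using h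

theorem wdim_zero (c : Sym2 V → ℝ) : Wdim G 0 c = 0 := by
  rw [Wdim, wspace_zero, finrank_bot]

end FinDim

/-! ### Star graph basics -/

section Star

theorem starGraph_adj {a : ℕ} {i j : Fin (a + 1)} :
    (starGraph a).Adj i j ↔ i ≠ j ∧ (i = 0 ∨ j = 0) := by
  constructor
  · rintro ⟨hne, h | h⟩
    · exact ⟨hne, Or.inl h⟩
    · exact ⟨hne, Or.inr h⟩
  · rintro ⟨hne, h⟩
    exact ⟨hne, h.imp id id⟩

theorem starGraph_degree {a : ℕ} (i : Fin (a + 1)) [Fintype ((starGraph a).neighborSet i)] :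
    (starGraph a).degree i = if i = 0 then a else 1 := by
  classical
  rw [SimpleGraph.degree]
  by_cases h0 : i = 0
  · subst h0
    rw [if_pos rfl]
    have : (starGraph a).neighborFinset 0 = Finset.univ.erase 0 := by
      ext j
      rw [SimpleGraph.mem_neighborFinset, Finset.mem_erase, starGraph_adj]
      constructor
      · rintro ⟨hne, _⟩
        exact ⟨fun hj => hne hj.symm, Finset.mem_univ j⟩
      · rintro ⟨hj, _⟩
        exact ⟨fun h => hj h.symm, Or.inl rfl⟩
    rw [this, Finset.card_erase_of_mem (Finset.mem_univ _), Finset.card_univ, Fintype.card_fin]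
    omega
  · rw [if_neg h0]
    have : (starGraph a).neighborFinset i = {0} := by
      ext j
      rw [SimpleGraph.mem_neighborFinset, Finset.mem_singleton, starGraph_adj]
      constructor
      · rintro ⟨hne, h | h⟩
        · exact absurd h h0
        · exact h
      · rintro rfl
        exact ⟨h0, Or.inr rfl⟩
    rw [this, Finset.card_singleton]

end Star

/-! ### The counting identity -/

section Count

variable {V : Type*} [Fintype V] (G : SimpleGraph V)

theorem dcount_eq_card (i : ℤ) :
    dcount G i = (Finset.univ.filter fun u => (G.degree u : ℤ) = i).card := by
  classical
  rw [dcount, Nat.card_eq_fintype_card, Fintype.card_subtype]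

theorem sum_min_eq (r a : ℕ) (ha : 1 ≤ a) :
    (∑ u : V, min (r - G.degree u) a) =
      (∑ t ∈ Finset.Icc 1 (a - 1), t * dcount G ((r : ℤ) - t)) +
      a * ∑ t ∈ Finset.Icc a r, dcount G ((r : ℤ) - t) := by
  classical
  have hd : ∀ i : ℤ, dcount G i = ∑ u : V, if (G.degree u : ℤ) = i then 1 else 0 := by
    intro i
    rw [dcount_eq_card, Finset.card_filter]
  symm
  calc (∑ t ∈ Finset.Icc 1 (a - 1), t * dcount G ((r : ℤ) - t)) +
      a * ∑ t ∈ Finset.Icc a r, dcount G ((r : ℤ) - t)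
      = (∑ t ∈ Finset.Icc 1 (a - 1), ∑ u : V, if (G.degree u : ℤ) = (r : ℤ) - t then t else 0) +
        ∑ t ∈ Finset.Icc a r, ∑ u : V, if (G.degree u : ℤ) = (r : ℤ) - t then a else 0 := by
        rw [Finset.mul_sum]
        congr 1
        · apply Finset.sum_congr rfl
          intro t _
          rw [hd, Finset.mul_sum]
          apply Finset.sum_congr rfl
          intro u _
          rw [mul_ite, mul_one, mul_zero]
        · apply Finset.sum_congr rfl
          intro t _
          rw [hd, Finset.mul_sum]
          apply Finset.sum_congr rfl
          intro u _
          rw [mul_ite, mul_one, mul_zero]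
    _ = (∑ u : V, ∑ t ∈ Finset.Icc 1 (a - 1), if (G.degree u : ℤ) = (r : ℤ) - t then t else 0) +
        ∑ u : V, ∑ t ∈ Finset.Icc a r, if (G.degree u : ℤ) = (r : ℤ) - t then a else 0 := by
        rw [Finset.sum_comm, Finset.sum_comm (s := Finset.Icc a r)]
    _ = ∑ u : V, ((∑ t ∈ Finset.Icc 1 (a - 1), if (G.degree u : ℤ) = (r : ℤ) - t then t else 0) +
        ∑ t ∈ Finset.Icc a r, if (G.degree u : ℤ) = (r : ℤ) - t then a else 0) := by
        rw [Finset.sum_add_distrib]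
    _ = ∑ u : V, min (r - G.degree u) a := by
        apply Finset.sum_congr rfl
        intro u _
        by_cases hdr : G.degree u < r
        · set d := G.degree u with hdd
          have hiff : ∀ t : ℕ, ((d : ℤ) = (r : ℤ) - t) ↔ t = r - d := by intro t; omega
          rw [Finset.sum_congr rfl (fun t _ => if_congr (hiff t) rfl rfl),
            Finset.sum_congr rfl (fun t (_ : t ∈ Finset.Icc a r) => if_congr (hiff t) rfl rfl),
            Finset.sum_ite_eq' (Finset.Icc 1 (a - 1)) (r - d) (fun t => t),
            Finset.sum_ite_eq' (Finset.Icc a r) (r - d) (fun _ => a)]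
          simp only [Finset.mem_Icc]
          rcases Nat.lt_or_ge (r - d) a with h | h
          · rw [if_pos (by omega), if_neg (by omega), add_zero, Nat.min_eq_left (le_of_lt h)]
          · rw [if_neg (by omega), if_pos (by omega), zero_add, Nat.min_eq_right h]
        · have h1 : ∑ t ∈ Finset.Icc 1 (a - 1),
              (if (G.degree u : ℤ) = (r : ℤ) - t then t else 0) = 0 := by
            apply Finset.sum_eq_zero
            intro t ht
            rw [Finset.mem_Icc] at ht
            rw [if_neg (by omega)]
          have h2 : ∑ t ∈ Finset.Icc a r,
              (if (G.degree u : ℤ) = (r : ℤ) - t then a else 0) = 0 := by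
            apply Finset.sum_eq_zero
            intro t ht
            rw [Finset.mem_Icc] at ht
            rw [if_neg (by omega)]
          rw [h1, h2, Nat.sub_eq_zero_of_le (le_of_not_gt hdr), Nat.zero_min]

end Count
/-! ### Simulation lemma -/

section Sim

theorem map_edge_mem {U V' : Type*} {G : SimpleGraph U} {P : SimpleGraph V'} {φ : U → V'}
    (hadj : ∀ u w, G.Adj u w → P.Adj (φ u) (φ w)) {e : Sym2 U} (he : e ∈ G.edgeSet) :
    Sym2.map φ e ∈ P.edgeSet := by
  induction e using Sym2.ind with
  | _ x y =>
    rw [Sym2.map_pair_eq, SimpleGraph.mem_edgeSet]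
    exact hadj x y ((SimpleGraph.mem_edgeSet G).mp he)

theorem infected_map {U V' : Type*} {G : SimpleGraph U} {P : SimpleGraph V'} {φ : U → V'}
    (hinj : Function.Injective φ) (hadj : ∀ u w, G.Adj u w → P.Adj (φ u) (φ w))
    {t s : ℕ} {S : Set (Sym2 U)} {S' : Set (Sym2 V')} (B : U → Finset (Sym2 V'))
    (hB : ∀ u, ∀ f ∈ B u, f ∈ P.edgeSet ∧ φ u ∈ f ∧ Infected P s S' f)
    (hBdisj : ∀ u, ∀ f ∈ B u, ∀ e : Sym2 U, Sym2.map φ e ≠ f)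
    (hcard : ∀ u, s ≤ t + (B u).card)
    (hS : ∀ e ∈ S, Infected P s S' (Sym2.map φ e)) :
    ∀ e, Infected G t S e → Infected P s S' (Sym2.map φ e) := by
  classical
  intro e he
  induction he with
  | init h => exact hS _ h
  | step he v hv T hT hT1 hT2 hT3 ih =>
    refine .step (map_edge_mem hadj he) (φ v) (Sym2.mem_map.mpr ⟨v, hv, rfl⟩)
      (T.image (Sym2.map φ) ∪ B v) ?_ ?_ ?_ ?_
    · rw [Finset.card_union_of_disjoint, Finset.card_image_of_injective _ (Sym2.map.injective hinj)]
      · calc s ≤ t + (B v).card := hcard v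
          _ ≤ T.card + (B v).card := Nat.add_le_add_right hT _
      · rw [Finset.disjoint_left]
        intro f hf hfB
        obtain ⟨g, _, rfl⟩ := Finset.mem_image.mp hf
        exact hBdisj v _ hfB g rfl
    · intro f hf
      rcases Finset.mem_union.mp hf with hf | hf
      · obtain ⟨g, hg, rfl⟩ := Finset.mem_image.mp hf
        exact map_edge_mem hadj (hT1 g hg)
      · exact (hB v f hf).1
    · intro f hf
      rcases Finset.mem_union.mp hf with hf | hf
      · obtain ⟨g, hg, rfl⟩ := Finset.mem_image.mp hf
        exact Sym2.mem_map.mpr ⟨v, hT2 g hg, rfl⟩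
      · exact (hB v f hf).2.1
    · intro f hf
      rcases Finset.mem_union.mp hf with hf | hf
      · obtain ⟨g, hg, rfl⟩ := Finset.mem_image.mp hf
        exact ih g hg
      · exact (hB v f hf).2.2

end Sim

/-! ### The upper bound construction -/

section Upper

theorem card_filter_lt (a m : ℕ) :
    (Finset.univ.filter fun j : Fin a => (j : ℕ) < m).card = min m a := by
  classical
  rw [← Fintype.card_subtype]
  refine (Fintype.card_congr ⟨fun x => ⟨x.1.1, lt_min x.2 x.1.2⟩,
    fun y => ⟨⟨y.1, lt_of_lt_of_le y.2 (min_le_right m a)⟩, lt_of_lt_of_le y.2 (min_le_left m a)⟩,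
    fun x => rfl, fun y => rfl⟩).trans (Fintype.card_fin _)

variable {U : Type*} [Fintype U] {G : SimpleGraph U} {a r : ℕ}

/-- The star edge from `(u,0)` to `(u, j+1)` in `G □ S_a`. -/
abbrev starEdge (u : U) (j : Fin a) : Sym2 (U × Fin (a + 1)) := s((u, 0), (u, j.succ))

/-- The copy of an edge of `G` in layer `i` of `G □ S_a`. -/
abbrev layerMap (i : Fin (a + 1)) : Sym2 U → Sym2 (U × Fin (a + 1)) :=
  Sym2.map (fun u => (u, i))

theorem starEdge_mem (ha : 1 ≤ a) (u : U) (j : Fin a) :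
    starEdge u j ∈ (G □ starGraph a).edgeSet := by
  rw [starEdge, SimpleGraph.mem_edgeSet, SimpleGraph.boxProd_adj]
  exact Or.inr ⟨starGraph_adj.mpr ⟨(Fin.succ_ne_zero j).symm, Or.inl rfl⟩, rfl⟩

theorem starEdge_ne_layer {u : U} {j : Fin a} {i : Fin (a + 1)} {e : Sym2 U} :
    layerMap i e ≠ starEdge u j := by
  induction e using Sym2.ind with
  | _ x y =>
    intro h
    rw [layerMap, Sym2.map_pair_eq, starEdge, Sym2.eq_iff] at h
    rcases h with ⟨h1, h2⟩ | ⟨h1, h2⟩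
    · have e1 : i = 0 := congrArg Prod.snd h1
      have e2 : i = j.succ := congrArg Prod.snd h2
      exact Fin.succ_ne_zero j (e2 ▸ e1)
    · have e1 : i = j.succ := congrArg Prod.snd h1
      have e2 : i = 0 := congrArg Prod.snd h2
      exact Fin.succ_ne_zero j (e1 ▸ e2)

theorem layerMap_mem (hadj : e ∈ G.edgeSet) {i : Fin (a + 1)} :
    layerMap i e ∈ (G □ starGraph a).edgeSet :=
  map_edge_mem (fun u w h => SimpleGraph.boxProd_adj.mpr (Or.inl ⟨h, rfl⟩)) hadj

theorem me_boxProd_le (hr : 1 ≤ r) (ha : 1 ≤ a) :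
    me (G □ starGraph a) r ≤
      me G r + a * me G (r - 1) + ∑ u : U, min (r - G.degree u) a := by
  classical
  obtain ⟨S1, hfin1, hperc1, hcard1⟩ := exists_me_set G r
  obtain ⟨S2, hfin2, hperc2, hcard2⟩ := exists_me_set G (r - 1)
  set Sr := hfin1.toFinset with hSr
  set Sr' := hfin2.toFinset with hSr'
  set P := G □ starGraph a with hP
  set k : U → ℕ := fun u => min (r - G.degree u) a with hk
  set S0 : Finset (Sym2 (U × Fin (a + 1))) := Sr.image (layerMap 0) with hS0
  set SL : Finset (Sym2 (U × Fin (a + 1))) :=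
    Finset.univ.biUnion (fun j : Fin a => Sr'.image (layerMap j.succ)) with hSL
  set Sstar : Finset (Sym2 (U × Fin (a + 1))) :=
    Finset.univ.biUnion
      (fun u => (Finset.univ.filter fun j : Fin a => (j : ℕ) < k u).image (starEdge u)) with hSstar
  set Stot := S0 ∪ SL ∪ Sstar with hStot
  have hS1c : (Sr : Set (Sym2 U)) = S1 := hfin1.coe_toFinset
  have hS2c : (Sr' : Set (Sym2 U)) = S2 := hfin2.coe_toFinset
  -- membership in Stot helpers
  have hmem0 : ∀ e ∈ S1, layerMap (0 : Fin (a+1)) e ∈ (Stot : Set (Sym2 (U × Fin (a+1)))) := by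
    intro e he
    have : layerMap (0 : Fin (a+1)) e ∈ S0 :=
      Finset.mem_image_of_mem _ (by rw [hSr, Set.Finite.mem_toFinset]; exact he)
    simp only [hStot, Finset.coe_union, Set.mem_union, Finset.mem_coe]
    exact Or.inl (Or.inl this)
  have hmemL : ∀ (j : Fin a), ∀ e ∈ S2,
      layerMap j.succ e ∈ (Stot : Set (Sym2 (U × Fin (a+1)))) := by
    intro j e he
    have : layerMap j.succ e ∈ SL := Finset.mem_biUnion.mpr
      ⟨j, Finset.mem_univ _, Finset.mem_image_of_mem _ (by
        rw [hSr', Set.Finite.mem_toFinset]; exact he)⟩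
    simp only [hStot, Finset.coe_union, Set.mem_union, Finset.mem_coe]
    exact Or.inl (Or.inr this)
  have hmemS : ∀ (u : U) (j : Fin a), (j : ℕ) < k u →
      starEdge u j ∈ (Stot : Set (Sym2 (U × Fin (a+1)))) := by
    intro u j hj
    have : starEdge u j ∈ Sstar := Finset.mem_biUnion.mpr
      ⟨u, Finset.mem_univ _, Finset.mem_image_of_mem _ (by
        rw [Finset.mem_filter]; exact ⟨Finset.mem_univ _, hj⟩)⟩
    simp only [hStot, Finset.coe_union, Set.mem_union, Finset.mem_coe]
    exact Or.inr this
  -- phase 1 : layer 0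
  have h1 : ∀ e ∈ G.edgeSet, Infected P r (Stot : Set _) (layerMap (0 : Fin (a+1)) e) := by
    intro e he
    refine infected_map (φ := fun u => (u, (0 : Fin (a+1)))) (fun x y h => (Prod.ext_iff.mp h).1)
      (fun u w h => SimpleGraph.boxProd_adj.mpr (Or.inl ⟨h, rfl⟩))
      (fun _ => ∅) (by simp) (by simp) (by simp) (fun f hf => .init (hmem0 f hf)) e
      (hperc1.2 e he)
  -- phase 2 : star edges
  have h2 : ∀ (u : U) (j : Fin a), Infected P r (Stot : Set _) (starEdge u j) := by
    intro u j
    by_cases hj : (j : ℕ) < k u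
    · exact .init (hmemS u j hj)
    have hT0mem : ∀ f ∈ (G.incidenceFinset u).image (layerMap (0 : Fin (a+1))),
        f ∈ P.edgeSet ∧ ((u, (0 : Fin (a+1))) : U × Fin (a+1)) ∈ f ∧
          Infected P r (Stot : Set _) f := by
      intro f hf
      obtain ⟨g, hg, rfl⟩ := Finset.mem_image.mp hf
      rw [SimpleGraph.mem_incidenceFinset] at hg
      exact ⟨layerMap_mem hg.1, Sym2.mem_map.mpr ⟨u, hg.2, rfl⟩, h1 g hg.1⟩
    by_cases hur : r ≤ G.degree u
    · refine .step (starEdge_mem ha u j) ((u, (0 : Fin (a+1))))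
        (Sym2.mem_mk_left _ _) ((G.incidenceFinset u).image (layerMap 0)) ?_
        (fun f hf => (hT0mem f hf).1) (fun f hf => (hT0mem f hf).2.1)
        (fun f hf => (hT0mem f hf).2.2)
      rw [Finset.card_image_of_injective _
        (Sym2.map.injective (fun x y h => (Prod.ext_iff.mp h).1)),
        SimpleGraph.card_incidenceFinset_eq_degree]
      exact hur
    · -- degree u < r and k u ≤ j < a
      push_neg at hur
      have hkj : k u ≤ (j : ℕ) := le_of_not_gt hj
      have hka : k u < a := lt_of_le_of_lt hkj j.2
      have hkval : k u = r - G.degree u := by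
        rcases Nat.le_total (r - G.degree u) a with h | h
        · simp only [hk]
          exact Nat.min_eq_left h
        · exfalso
          simp only [hk] at hka
          rw [Nat.min_eq_right h] at hka
          exact lt_irrefl _ hka
      refine .step (starEdge_mem ha u j) ((u, (0 : Fin (a+1))))
        (Sym2.mem_mk_left _ _)
        (((G.incidenceFinset u).image (layerMap 0)) ∪
          ((Finset.univ.filter fun j' : Fin a => (j' : ℕ) < k u).image (starEdge u))) ?_ ?_ ?_ ?_
      · rw [Finset.card_union_of_disjoint, Finset.card_image_of_injective _
          (Sym2.map.injective (fun x y h => (Prod.ext_iff.mp h).1)),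
          SimpleGraph.card_incidenceFinset_eq_degree, Finset.card_image_of_injective,
          card_filter_lt]
        · have h6 : k u ≤ a := by simp only [hk]; exact min_le_right _ _
          rw [Nat.min_eq_left h6, hkval]
          omega
        · intro x y hxy
          rw [starEdge, starEdge, Sym2.eq_iff] at hxy
          rcases hxy with ⟨h1', h2'⟩ | ⟨h1', h2'⟩
          · exact Fin.succ_injective _ (congrArg Prod.snd h2')
          · exact (Fin.succ_ne_zero y (congrArg Prod.snd h1').symm).elim
        · rw [Finset.disjoint_left]
          intro f hf hf'
          obtain ⟨g, _, rfl⟩ := Finset.mem_image.mp hf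
          obtain ⟨j', _, hj'⟩ := Finset.mem_image.mp hf'
          exact starEdge_ne_layer hj'.symm
      · intro f hf
        rcases Finset.mem_union.mp hf with hf | hf
        · exact (hT0mem f hf).1
        · obtain ⟨j', _, rfl⟩ := Finset.mem_image.mp hf
          exact starEdge_mem ha u j'
      · intro f hf
        rcases Finset.mem_union.mp hf with hf | hf
        · exact (hT0mem f hf).2.1
        · obtain ⟨j', _, rfl⟩ := Finset.mem_image.mp hf
          exact Sym2.mem_mk_left _ _
      · intro f hf
        rcases Finset.mem_union.mp hf with hf | hf
        · exact (hT0mem f hf).2.2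
        · obtain ⟨j', hj', rfl⟩ := Finset.mem_image.mp hf
          exact .init (hmemS u j' (Finset.mem_filter.mp hj').2)
  -- phase 3 : other layers
  have h3 : ∀ (j : Fin a), ∀ e ∈ G.edgeSet,
      Infected P r (Stot : Set _) (layerMap j.succ e) := by
    intro j e he
    refine infected_map (φ := fun u => (u, j.succ)) (fun x y h => (Prod.ext_iff.mp h).1)
      (fun u w h => SimpleGraph.boxProd_adj.mpr (Or.inl ⟨h, rfl⟩))
      (fun u => {starEdge u j}) ?_ ?_ ?_ (fun f hf => .init (hmemL j f hf)) e
      (hperc2.2 e he)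
    · intro u f hf
      rw [Finset.mem_singleton] at hf
      subst hf
      exact ⟨starEdge_mem ha u j, Sym2.mem_mk_right _ _, h2 u j⟩
    · intro u f hf e'
      rw [Finset.mem_singleton] at hf
      subst hf
      exact starEdge_ne_layer
    · intro u
      rw [Finset.card_singleton]
      omega
  -- percolation
  have hperc : Percolates P r (Stot : Set _) := by
    constructor
    · intro e he
      simp only [hStot, Finset.coe_union, Set.mem_union, Finset.mem_coe] at he
      rcases he with (he | he) | he
      · obtain ⟨g, hg, rfl⟩ := Finset.mem_image.mp he
        rw [hSr, Set.Finite.mem_toFinset] at hg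
        exact layerMap_mem (hperc1.1 hg)
      · obtain ⟨j, _, hj⟩ := Finset.mem_biUnion.mp he
        obtain ⟨g, hg, rfl⟩ := Finset.mem_image.mp hj
        rw [hSr', Set.Finite.mem_toFinset] at hg
        exact layerMap_mem (hperc2.1 hg)
      · obtain ⟨u, _, hu⟩ := Finset.mem_biUnion.mp he
        obtain ⟨j, _, rfl⟩ := Finset.mem_image.mp hu
        exact starEdge_mem ha u j
    · intro e
      induction e using Sym2.ind with
      | _ x y =>
        intro he
        obtain ⟨u, i⟩ := x
        obtain ⟨w, i'⟩ := y
        rw [SimpleGraph.mem_edgeSet, SimpleGraph.boxProd_adj] at he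
        rcases he with ⟨hadj, h2'⟩ | ⟨hstar', h2'⟩
        · dsimp at h2'
          subst h2'
          have heq : s((u, i), (w, i)) = layerMap i s(u, w) :=
            (Sym2.map_pair_eq (fun u => (u, i)) u w).symm
          rw [heq]
          rcases Fin.eq_zero_or_eq_succ i with rfl | ⟨j, rfl⟩
          · exact h1 _ hadj
          · exact h3 j _ hadj
        · dsimp at h2'
          subst h2'
          rcases starGraph_adj.mp hstar' with ⟨hne, rfl | h0⟩
          · obtain ⟨j, rfl⟩ := (Fin.eq_zero_or_eq_succ i').resolve_left (fun h => hne h.symm)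
            exact h2 u j
          · subst h0
            obtain ⟨j, rfl⟩ := (Fin.eq_zero_or_eq_succ i).resolve_left hne
            rw [Sym2.eq_swap]
            exact h2 u j
  -- cardinality
  have hcard : (Stot : Set (Sym2 (U × Fin (a+1)))).ncard ≤
      me G r + a * me G (r - 1) + ∑ u : U, min (r - G.degree u) a := by
    rw [Set.ncard_coe_finset]
    calc Stot.card ≤ (S0 ∪ SL).card + Sstar.card := Finset.card_union_le _ _
      _ ≤ S0.card + SL.card + Sstar.card :=
          Nat.add_le_add_right (Finset.card_union_le _ _) _
      _ ≤ me G r + a * me G (r - 1) + ∑ u : U, min (r - G.degree u) a := by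
          have c0 : S0.card ≤ me G r := by
            calc S0.card ≤ Sr.card := Finset.card_image_le
              _ = me G r := by
                  rw [hSr, ← Set.ncard_eq_toFinset_card]
                  exact hcard1
          have cL : SL.card ≤ a * me G (r - 1) := by
            calc SL.card ≤ ∑ j : Fin a, (Sr'.image (layerMap j.succ)).card :=
                  Finset.card_biUnion_le
              _ ≤ ∑ _j : Fin a, me G (r - 1) := by
                  apply Finset.sum_le_sum
                  intro j _
                  calc (Sr'.image (layerMap j.succ)).card ≤ Sr'.card := Finset.card_image_le
                    _ = me G (r - 1) := by
                        rw [hSr', ← Set.ncard_eq_toFinset_card]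
                        exact hcard2
              _ = a * me G (r - 1) := by
                  rw [Finset.sum_const, Finset.card_univ, Fintype.card_fin, smul_eq_mul]
          have cS : Sstar.card ≤ ∑ u : U, min (r - G.degree u) a := by
            calc Sstar.card ≤
                ∑ u : U, ((Finset.univ.filter fun j : Fin a => (j : ℕ) < k u).image
                  (starEdge u)).card := Finset.card_biUnion_le
              _ ≤ ∑ u : U, min (r - G.degree u) a := by
                  apply Finset.sum_le_sum
                  intro u _
                  calc ((Finset.univ.filter fun j : Fin a => (j : ℕ) < k u).image
                        (starEdge u)).card
                      ≤ (Finset.univ.filter fun j : Fin a => (j : ℕ) < k u).card :=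
                        Finset.card_image_le
                    _ = min (k u) a := card_filter_lt a (k u)
                    _ ≤ k u := min_le_left _ _
                    _ = min (r - G.degree u) a := by rw [hk]
          omega
  exact le_trans (me_le_ncard (Stot : Set _).toFinite hperc) hcard

end Upper
/-! ### The product coloring -/

section Coloring

variable {U : Type*}

noncomputable def prodColoring (a : ℕ) (c₀ : Sym2 U → ℝ) (γ : Fin (a + 1) → ℝ) :
    Sym2 (U × Fin (a + 1)) → ℝ :=
  Sym2.lift ⟨fun x y => if x.1 = y.1 then γ (max x.2 y.2) else c₀ s(x.1, y.1), by
    intro x y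
    dsimp only
    by_cases h : x.1 = y.1
    · rw [if_pos h, if_pos h.symm, max_comm]
    · rw [if_neg h, if_neg (fun h' => h h'.symm), Sym2.eq_swap]⟩

theorem prodColoring_layer (a : ℕ) (c₀ : Sym2 U → ℝ) (γ : Fin (a + 1) → ℝ)
    {u w : U} (h : u ≠ w) (i i' : Fin (a + 1)) :
    prodColoring a c₀ γ s((u, i), (w, i')) = c₀ s(u, w) := by
  rw [prodColoring, Sym2.lift_mk]
  exact if_neg h

theorem prodColoring_same (a : ℕ) (c₀ : Sym2 U → ℝ) (γ : Fin (a + 1) → ℝ)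
    (u : U) (i i' : Fin (a + 1)) :
    prodColoring a c₀ γ s((u, i), (u, i')) = γ (max i i') := by
  rw [prodColoring, Sym2.lift_mk]
  exact if_pos rfl

theorem prod_edge_cases {G : SimpleGraph U} {a : ℕ} {e : Sym2 (U × Fin (a + 1))} {u : U}
    {i : Fin (a + 1)} (he : e ∈ (G □ starGraph a).edgeSet) (hx : (u, i) ∈ e) :
    (∃ w, G.Adj u w ∧ e = s((u, i), (w, i))) ∨
    (∃ i', (starGraph a).Adj i i' ∧ e = s((u, i), (u, i'))) := by
  have hspec := Sym2.other_spec hx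
  have hadj : (G □ starGraph a).Adj (u, i) (Sym2.Mem.other hx) := by
    rw [← SimpleGraph.mem_edgeSet, hspec]; exact he
  rcases SimpleGraph.boxProd_adj.mp hadj with ⟨h1, h2⟩ | ⟨h1, h2⟩
  · left
    refine ⟨(Sym2.Mem.other hx).1, h1, hspec.symm.trans ?_⟩
    exact congrArg (fun z => s((u, i), z)) (Prod.ext rfl h2.symm)
  · right
    refine ⟨(Sym2.Mem.other hx).2, h1, hspec.symm.trans ?_⟩
    exact congrArg (fun z => s((u, i), z)) (Prod.ext h2.symm rfl)

theorem prodColoring_proper {G : SimpleGraph U} {a : ℕ} {c₀ : Sym2 U → ℝ}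
    {γ : Fin (a + 1) → ℝ} (hc : IsProperEdgeColoring G c₀) (hγinj : Function.Injective γ)
    (hγ : ∀ e ∈ G.edgeSet, ∀ j, c₀ e ≠ γ j) :
    IsProperEdgeColoring (G □ starGraph a) (prodColoring a c₀ γ) := by
  rintro e he f hf hef ⟨⟨u, i⟩, hxe, hxf⟩
  rcases prod_edge_cases he hxe with ⟨w, hw, rfl⟩ | ⟨i', hi', rfl⟩ <;>
    rcases prod_edge_cases hf hxf with ⟨w', hw', rfl⟩ | ⟨i'', hi'', rfl⟩
  · -- layer / layer
    rw [prodColoring_layer a c₀ γ hw.ne, prodColoring_layer a c₀ γ hw'.ne]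
    have hne : s(u, w) ≠ s(u, w') := by
      intro hh
      apply hef
      rcases Sym2.eq_iff.mp hh with ⟨-, rfl⟩ | ⟨rfl, rfl⟩
      · rfl
      · rfl
    exact hc s(u, w) hw s(u, w') hw' hne ⟨u, Sym2.mem_mk_left _ _, Sym2.mem_mk_left _ _⟩
  · -- layer / star
    rw [prodColoring_layer a c₀ γ hw.ne, prodColoring_same]
    exact hγ s(u, w) hw _
  · -- star / layer
    rw [prodColoring_layer a c₀ γ hw'.ne, prodColoring_same]
    exact (hγ s(u, w') hw' _).symm
  · -- star / star
    rw [prodColoring_same, prodColoring_same]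
    intro hcol
    have hmax := hγinj hcol
    rcases starGraph_adj.mp hi' with ⟨hne1, h1 | h1⟩
    · subst h1
      rw [max_eq_right (Fin.zero_le i'), max_eq_right (Fin.zero_le i'')] at hmax
      exact hef (by rw [hmax])
    · subst h1
      rcases starGraph_adj.mp hi'' with ⟨hne2, h2 | h2⟩
      · exact hne1 h2
      · subst h2
        exact hef rfl
  
theorem boxProd_star_degree [Fintype U] (G : SimpleGraph U) {a : ℕ} (u : U) (i : Fin (a + 1))
    [Fintype ((G □ starGraph a).neighborSet (u, i))] [Fintype (G.neighborSet u)]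
    [Fintype ((starGraph a).neighborSet i)] :
    (G □ starGraph a).degree (u, i) = G.degree u + if i = 0 then a else 1 := by
  classical
  rw [SimpleGraph.degree_boxProd, starGraph_degree]

end Coloring
/-! ### The dimension lower bound -/

section Lower

variable {U : Type*} [Fintype U]

noncomputable def Zpoly (G : SimpleGraph U) (c₀ : Sym2 U → ℝ) (u : U) : Polynomial ℝ :=
  ∏ e ∈ G.incidenceFinset u, (X - C (c₀ e))

theorem Zpoly_degree (G : SimpleGraph U) (c₀ : Sym2 U → ℝ) (u : U) :
    (Zpoly G c₀ u).degree = (G.degree u : WithBot ℕ) := by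
  classical
  rw [Zpoly, Polynomial.degree_prod,
    Finset.sum_congr rfl (fun e _ => Polynomial.degree_X_sub_C (c₀ e)),
    Finset.sum_const, SimpleGraph.card_incidenceFinset_eq_degree]
  simp [nsmul_eq_mul]

theorem Zpoly_eval_eq_zero {G : SimpleGraph U} (c₀ : Sym2 U → ℝ) {u w : U} (h : G.Adj u w) :
    (Zpoly G c₀ u).eval (c₀ s(u, w)) = 0 := by
  classical
  rw [Zpoly, Polynomial.eval_prod]
  apply Finset.prod_eq_zero (i := s(u, w))
  · rw [SimpleGraph.mem_incidenceFinset]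
    exact ⟨h, Sym2.mem_mk_left _ _⟩
  · simp

theorem Zpoly_eval_eq_zero' {G : SimpleGraph U} (c₀ : Sym2 U → ℝ) {u w : U} (h : G.Adj u w) :
    (Zpoly G c₀ w).eval (c₀ s(u, w)) = 0 := by
  rw [Sym2.eq_swap]
  exact Zpoly_eval_eq_zero c₀ h.symm

/-- The underlying function of the embedding of
`W(G,r) × W(G,r-1)^a × ⊕ᵤ ℝ_{<min(r-dᵤ, a)}[X]` into `W(G □ Sₐ, r)`. -/
noncomputable def PhiFun (G : SimpleGraph U) (a : ℕ) (c₀ : Sym2 U → ℝ) (γ : Fin (a + 1) → ℝ)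
    (p : U → Polynomial ℝ) (q : Fin a → U → Polynomial ℝ) (g : U → Polynomial ℝ) :
    (U × Fin (a + 1)) → Polynomial ℝ := fun x =>
  if h : x.2 = 0 then p x.1 + Zpoly G c₀ x.1 * g x.1
  else p x.1 + (X - C (γ x.2)) * q (x.2.pred h) x.1 + C ((g x.1).eval (γ x.2)) * Zpoly G c₀ x.1

theorem PhiFun_at_zero (G : SimpleGraph U) (a : ℕ) (c₀ : Sym2 U → ℝ) (γ : Fin (a + 1) → ℝ)
    (p : U → Polynomial ℝ) (q : Fin a → U → Polynomial ℝ) (g : U → Polynomial ℝ) (u : U) :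
    PhiFun G a c₀ γ p q g (u, 0) = p u + Zpoly G c₀ u * g u := by
  rw [PhiFun, dif_pos rfl]

theorem PhiFun_at_ne (G : SimpleGraph U) (a : ℕ) (c₀ : Sym2 U → ℝ) (γ : Fin (a + 1) → ℝ)
    (p : U → Polynomial ℝ) (q : Fin a → U → Polynomial ℝ) (g : U → Polynomial ℝ) (u : U)
    {i : Fin (a + 1)} (h : i ≠ 0) :
    PhiFun G a c₀ γ p q g (u, i) =
      p u + (X - C (γ i)) * q (i.pred h) u + C ((g u).eval (γ i)) * Zpoly G c₀ u := by
  rw [PhiFun, dif_neg h]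

theorem PhiFun_add (G : SimpleGraph U) (a : ℕ) (c₀ : Sym2 U → ℝ) (γ : Fin (a + 1) → ℝ)
    (p p' : U → Polynomial ℝ) (q q' : Fin a → U → Polynomial ℝ) (g g' : U → Polynomial ℝ) :
    PhiFun G a c₀ γ (p + p') (q + q') (g + g') =
      PhiFun G a c₀ γ p q g + PhiFun G a c₀ γ p' q' g' := by
  funext x
  obtain ⟨u, i⟩ := x
  by_cases h : i = 0
  · subst h
    simp only [Pi.add_apply, PhiFun_at_zero]
    ring
  · simp only [Pi.add_apply, PhiFun_at_ne _ _ _ _ _ _ _ _ h, Polynomial.eval_add, map_add]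
    ring

theorem PhiFun_smul (G : SimpleGraph U) (a : ℕ) (c₀ : Sym2 U → ℝ) (γ : Fin (a + 1) → ℝ)
    (t : ℝ) (p : U → Polynomial ℝ) (q : Fin a → U → Polynomial ℝ) (g : U → Polynomial ℝ) :
    PhiFun G a c₀ γ (t • p) (t • q) (t • g) = t • PhiFun G a c₀ γ p q g := by
  funext x
  obtain ⟨u, i⟩ := x
  by_cases h : i = 0
  · subst h
    simp only [Pi.smul_apply, PhiFun_at_zero, Polynomial.smul_eq_C_mul]
    ring
  · simp only [Pi.smul_apply, PhiFun_at_ne _ _ _ _ _ _ _ _ h, Polynomial.smul_eq_C_mul,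
      Polynomial.eval_mul, Polynomial.eval_C, map_mul]
    ring

theorem PhiFun_mem {G : SimpleGraph U} {a r : ℕ} (hr : 1 ≤ r) {c₀ : Sym2 U → ℝ}
    {γ : Fin (a + 1) → ℝ} {p : U → Polynomial ℝ} {q : Fin a → U → Polynomial ℝ}
    {g : U → Polynomial ℝ}
    (hp : p ∈ Wspace G r c₀) (hq : ∀ j, q j ∈ Wspace G (r - 1) c₀)
    (hg : ∀ u, g u ∈ Polynomial.degreeLT ℝ (min (r - G.degree u) a)) :
    PhiFun G a c₀ γ p q g ∈ Wspace (G □ starGraph a) r (prodColoring a c₀ γ) := by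
  classical
  have hgsmall : ∀ u, g u ≠ 0 → G.degree u < r := by
    intro u hgz
    have hdlt := Polynomial.mem_degreeLT.mp (hg u)
    have hdge : (0 : WithBot ℕ) ≤ (g u).degree := Polynomial.zero_le_degree_iff.mpr hgz
    by_contra hcon
    push_neg at hcon
    have h00 : min (r - G.degree u) a = 0 := by omega
    rw [h00] at hdlt
    exact absurd (lt_of_le_of_lt hdge hdlt) (by simp)
  constructor
  · -- degree bounds
    rintro ⟨u, i⟩
    rw [boxProd_star_degree (G := G)]
    have hpdeg : ∀ m : ℕ, G.degree u ≤ m → (p u).degree < ((min r m : ℕ) : WithBot ℕ) := by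
      intro m hm
      exact lt_of_lt_of_le (hp.1 u)
        (WithBot.coe_le_coe.mpr (min_le_min (le_refl r) hm))
    by_cases h : i = 0
    · subst h
      rw [if_pos rfl, PhiFun_at_zero]
      apply lt_of_le_of_lt (Polynomial.degree_add_le _ _)
      apply max_lt (hpdeg _ (Nat.le_add_right _ _))
      by_cases hgz : g u = 0
      · rw [hgz, mul_zero, Polynomial.degree_zero]
        exact WithBot.bot_lt_coe _
      · have hdu : G.degree u < r := hgsmall u hgz
        rw [Polynomial.degree_mul, Zpoly_degree]
        calc (G.degree u : WithBot ℕ) + (g u).degree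
            < (G.degree u : WithBot ℕ) + ((min (r - G.degree u) a : ℕ) : WithBot ℕ) :=
              WithBot.add_lt_add_left (by simp) (Polynomial.mem_degreeLT.mp (hg u))
          _ = ((G.degree u + min (r - G.degree u) a : ℕ) : WithBot ℕ) := by
              rw [Nat.cast_add]
          _ = ((min r (G.degree u + a) : ℕ) : WithBot ℕ) := by
              have hh : G.degree u + min (r - G.degree u) a = min r (G.degree u + a) := by
                omega
              rw [hh]
    · rw [if_neg h, PhiFun_at_ne _ _ _ _ _ _ _ _ h]
      apply lt_of_le_of_lt (Polynomial.degree_add_le _ _)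
      apply max_lt
      · apply lt_of_le_of_lt (Polynomial.degree_add_le _ _)
        apply max_lt (hpdeg _ (Nat.le_add_right _ _))
        by_cases hqz : q (i.pred h) u = 0
        · rw [hqz, mul_zero, Polynomial.degree_zero]
          exact WithBot.bot_lt_coe _
        · rw [Polynomial.degree_mul, Polynomial.degree_X_sub_C]
          have hqdeg := (hq (i.pred h)).1 u
          calc 1 + (q (i.pred h) u).degree
              < 1 + ((min (r - 1) (G.degree u) : ℕ) : WithBot ℕ) := by
                apply WithBot.add_lt_add_left (by simp) hqdeg
            _ = ((1 + min (r - 1) (G.degree u) : ℕ) : WithBot ℕ) := by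
                rw [Nat.cast_add]; rfl
            _ = ((min r (G.degree u + 1) : ℕ) : WithBot ℕ) := by
                have hh : 1 + min (r - 1) (G.degree u) = min r (G.degree u + 1) := by
                  omega
                rw [hh]
      · by_cases hez : (g u).eval (γ i) = 0
        · rw [hez, map_zero, zero_mul, Polynomial.degree_zero]
          exact WithBot.bot_lt_coe _
        · have hgz : g u ≠ 0 := fun hh => hez (by rw [hh]; simp)
          have hdu : G.degree u < r := hgsmall u hgz
          rw [Polynomial.degree_mul, Zpoly_degree, Polynomial.degree_C hez, zero_add]
          exact_mod_cast (show G.degree u < min r (G.degree u + 1) by omega)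
  · -- edge constraints
    rintro ⟨u, i⟩ ⟨w, i'⟩ hadj
    rcases SimpleGraph.boxProd_adj.mp hadj with ⟨h1, h2⟩ | ⟨h1, h2⟩
    · -- layer edge
      dsimp only at h1 h2
      subst h2
      rw [prodColoring_layer a c₀ γ h1.ne]
      by_cases h : i = 0
      · subst h
        rw [PhiFun_at_zero, PhiFun_at_zero, Polynomial.eval_add, Polynomial.eval_add,
          Polynomial.eval_mul, Polynomial.eval_mul, Zpoly_eval_eq_zero c₀ h1,
          Zpoly_eval_eq_zero' c₀ h1, hp.2 u w h1]
        ring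
      · rw [PhiFun_at_ne _ _ _ _ _ _ _ _ h, PhiFun_at_ne _ _ _ _ _ _ _ _ h]
        simp only [Polynomial.eval_add, Polynomial.eval_mul, Polynomial.eval_C]
        rw [Zpoly_eval_eq_zero c₀ h1, Zpoly_eval_eq_zero' c₀ h1, hp.2 u w h1,
          (hq (i.pred h)).2 u w h1]
        ring
    · -- star edge
      dsimp only at h1 h2
      subst h2
      rcases starGraph_adj.mp h1 with ⟨hne, h0 | h0⟩
      · subst h0
        have hi' : i' ≠ 0 := fun hh => hne hh.symm
        rw [prodColoring_same, max_eq_right (Fin.zero_le i'), PhiFun_at_zero,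
          PhiFun_at_ne _ _ _ _ _ _ _ _ hi']
        simp only [Polynomial.eval_add, Polynomial.eval_mul, Polynomial.eval_C,
          Polynomial.eval_sub, Polynomial.eval_X, sub_self, zero_mul]
        ring
      · subst h0
        rw [prodColoring_same, max_eq_left (Fin.zero_le i), PhiFun_at_zero,
          PhiFun_at_ne _ _ _ _ _ _ _ _ hne]
        simp only [Polynomial.eval_add, Polynomial.eval_mul, Polynomial.eval_C,
          Polynomial.eval_sub, Polynomial.eval_X, sub_self, zero_mul]
        ring

theorem PhiFun_inj {G : SimpleGraph U} {a r : ℕ} {c₀ : Sym2 U → ℝ}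
    {γ : Fin (a + 1) → ℝ} {p : U → Polynomial ℝ} {q : Fin a → U → Polynomial ℝ}
    {g : U → Polynomial ℝ}
    (hp : p ∈ Wspace G r c₀)
    (h : PhiFun G a c₀ γ p q g = 0) : p = 0 ∧ q = 0 ∧ g = 0 := by
  have hgp : ∀ u, g u = 0 ∧ p u = 0 := by
    intro u
    have h0 := congrFun h (u, 0)
    rw [PhiFun_at_zero, Pi.zero_apply] at h0
    by_cases hgz : g u = 0
    · refine ⟨hgz, ?_⟩
      rwa [hgz, mul_zero, add_zero] at h0
    · exfalso
      have hpu : p u = -(Zpoly G c₀ u * g u) := eq_neg_of_add_eq_zero_left h0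
      have hdg : (0 : WithBot ℕ) ≤ (g u).degree := Polynomial.zero_le_degree_iff.mpr hgz
      have hd1 : ((G.degree u : ℕ) : WithBot ℕ) ≤ (Zpoly G c₀ u * g u).degree := by
        rw [Polynomial.degree_mul, Zpoly_degree]
        exact le_add_of_nonneg_right hdg
      have hlt : (p u).degree < ((G.degree u : ℕ) : WithBot ℕ) :=
        lt_of_lt_of_le (hp.1 u) (WithBot.coe_le_coe.mpr (min_le_right _ _))
      rw [hpu, Polynomial.degree_neg] at hlt
      exact absurd hlt (not_lt_of_ge hd1)
  have hqz : ∀ (j : Fin a) (u : U), q j u = 0 := by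
    intro j u
    have hs := congrFun h (u, j.succ)
    rw [PhiFun_at_ne _ _ _ _ _ _ _ _ (Fin.succ_ne_zero j), Pi.zero_apply, (hgp u).1,
      (hgp u).2, Fin.pred_succ] at hs
    simp only [Polynomial.eval_zero, map_zero, zero_mul, add_zero, zero_add] at hs
    rcases mul_eq_zero.mp hs with hh | hh
    · exact absurd hh (Polynomial.X_sub_C_ne_zero _)
    · exact hh
  refine ⟨funext fun u => (hgp u).2, funext fun j => funext fun u => hqz j u,
    funext fun u => (hgp u).1⟩

theorem wdim_boxProd_ge (G : SimpleGraph U) {a r : ℕ} (hr : 1 ≤ r)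
    (c₀ : Sym2 U → ℝ) (γ : Fin (a + 1) → ℝ) :
    Wdim G r c₀ + a * Wdim G (r - 1) c₀ + (∑ u : U, min (r - G.degree u) a) ≤
      Wdim (G □ starGraph a) r (prodColoring a c₀ γ) := by
  classical
  let Dom := (Wspace G r c₀ × (Fin a → Wspace G (r - 1) c₀)) ×
    (∀ u : U, Polynomial.degreeLT ℝ (min (r - G.degree u) a))
  let Φ : Dom →ₗ[ℝ] ((U × Fin (a + 1)) → Polynomial ℝ) :=
    { toFun := fun pqg => PhiFun G a c₀ γ (pqg.1.1 : U → Polynomial ℝ)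
        (fun j => (pqg.1.2 j : U → Polynomial ℝ)) (fun u => (pqg.2 u : Polynomial ℝ))
      map_add' := fun x y => by
        have e1 : ((x + y).1.1 : U → Polynomial ℝ) = (x.1.1 : U → Polynomial ℝ) +
          (y.1.1 : U → Polynomial ℝ) := rfl
        have e2 : (fun j => ((x + y).1.2 j : U → Polynomial ℝ)) =
          (fun j => (x.1.2 j : U → Polynomial ℝ)) + fun j => (y.1.2 j : U → Polynomial ℝ) := rfl
        have e3 : (fun u => ((x + y).2 u : Polynomial ℝ)) =
          (fun u => (x.2 u : Polynomial ℝ)) + fun u => (y.2 u : Polynomial ℝ) := rfl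
        rw [e1, e2, e3, PhiFun_add]
      map_smul' := fun t x => by
        dsimp only [RingHom.id_apply]
        have e1 : ((t • x).1.1 : U → Polynomial ℝ) = t • (x.1.1 : U → Polynomial ℝ) := rfl
        have e2 : (fun j => ((t • x).1.2 j : U → Polynomial ℝ)) =
          t • fun j => (x.1.2 j : U → Polynomial ℝ) := rfl
        have e3 : (fun u => ((t • x).2 u : Polynomial ℝ)) =
          t • fun u => (x.2 u : Polynomial ℝ) := rfl
        rw [e1, e2, e3, PhiFun_smul] }
  have hinj : Function.Injective Φ := by
    rw [← LinearMap.ker_eq_bot, LinearMap.ker_eq_bot']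
    rintro ⟨⟨pp, qq⟩, gg⟩ hzero
    have hzero' : PhiFun G a c₀ γ (pp : U → Polynomial ℝ)
        (fun j => (qq j : U → Polynomial ℝ)) (fun u => (gg u : Polynomial ℝ)) = 0 := hzero
    obtain ⟨h1, h2, h3⟩ := PhiFun_inj pp.2 hzero'
    refine Prod.ext (Prod.ext ?_ ?_) ?_
    · exact Subtype.ext h1
    · funext j
      exact Subtype.ext (congrFun h2 j)
    · funext u
      exact Subtype.ext (congrFun h3 u)
  have hrange : LinearMap.range Φ ≤ Wspace (G □ starGraph a) r (prodColoring a c₀ γ) := by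
    rintro _ ⟨⟨⟨pp, qq⟩, gg⟩, rfl⟩
    have := PhiFun_mem (γ := γ) hr pp.2 (fun j => (qq j).2) (fun u => (gg u).2)
    exact this
  have hdom : Module.finrank ℝ Dom =
      Wdim G r c₀ + a * Wdim G (r - 1) c₀ + (∑ u : U, min (r - G.degree u) a) := by
    rw [Module.finrank_prod, Module.finrank_prod, Module.finrank_pi_fintype,
      Module.finrank_pi_fintype, Finset.sum_const, Finset.card_univ, Fintype.card_fin,
      smul_eq_mul]
    simp only [Wdim]
    congr 1
    exact Finset.sum_congr rfl fun u _ => finrank_degreeLT _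
  calc Wdim G r c₀ + a * Wdim G (r - 1) c₀ + (∑ u : U, min (r - G.degree u) a)
      = Module.finrank ℝ Dom := hdom.symm
    _ = Module.finrank ℝ (LinearMap.range Φ) := (LinearMap.finrank_range_of_inj hinj).symm
    _ ≤ Module.finrank ℝ (Wspace (G □ starGraph a) r (prodColoring a c₀ γ)) :=
        Submodule.finrank_mono hrange
    _ = Wdim (G □ starGraph a) r (prodColoring a c₀ γ) := rfl

end Lower
/-! ### Fresh colours -/

section Fresh

variable {U : Type*} [Fintype U]

noncomputable def freshγ (G : SimpleGraph U) (c₀ : Sym2 U → ℝ) (a : ℕ) : Fin (a + 1) → ℝ :=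
  fun j => (insert (0 : ℝ) (G.edgeFinset.image c₀)).max' (Finset.insert_nonempty _ _) + 1 + (j : ℕ)

theorem freshγ_inj (G : SimpleGraph U) (c₀ : Sym2 U → ℝ) (a : ℕ) :
    Function.Injective (freshγ G c₀ a) := by
  intro x y h
  simp only [freshγ] at h
  have : ((x : ℕ) : ℝ) = ((y : ℕ) : ℝ) := by linarith
  exact Fin.ext (Nat.cast_injective this)

theorem freshγ_avoid (G : SimpleGraph U) (c₀ : Sym2 U → ℝ) (a : ℕ) :
    ∀ e ∈ G.edgeSet, ∀ j, c₀ e ≠ freshγ G c₀ a j := by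
  intro e he j
  apply ne_of_lt
  have h1 : c₀ e ≤ (insert (0 : ℝ) (G.edgeFinset.image c₀)).max'
      (Finset.insert_nonempty _ _) := by
    apply Finset.le_max'
    exact Finset.mem_insert_of_mem (Finset.mem_image_of_mem c₀
      (SimpleGraph.mem_edgeFinset.mpr he))
  have h2 : (0 : ℝ) ≤ ((j : ℕ) : ℝ) := Nat.cast_nonneg _
  rw [freshγ]
  linarith

end Fresh

/-! ### The master induction -/

section Master

/-- The recursively constructed proper edge colouring of a product of stars. -/
noncomputable def spColoring : (l : List ℕ) → Sym2 (starProd l).1 → ℝ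
  | [] => fun _ => 0
  | a :: l => prodColoring a (spColoring l) (freshγ (starProd l).2 (spColoring l) a)

theorem spColoring_proper : ∀ l : List ℕ, IsProperEdgeColoring (starProd l).2 (spColoring l)
  | [] => by
    intro e he
    simp only [starProd] at he
    simp at he
    exact (Set.notMem_empty e he).elim
  | a :: l =>
    prodColoring_proper (spColoring_proper l) (freshγ_inj _ _ _) (freshγ_avoid _ _ _)

theorem master : ∀ l : List ℕ, (∀ b ∈ l, 1 ≤ b) → ∀ r : ℕ,
    me (starProd l).2 r = Wdim (starProd l).2 r (spColoring l)
  | [] => by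
    intro _ r
    show me (⊥ : SimpleGraph PUnit) r = Wdim (⊥ : SimpleGraph PUnit) r (spColoring [])
    rw [me_bot]
    exact (wdim_bot (V := PUnit) r (spColoring [])).symm
  | a :: l => by
    intro hl r
    have ha : 1 ≤ a := hl a List.mem_cons_self
    have hl' : ∀ b ∈ l, 1 ≤ b := fun b hb => hl b (List.mem_cons_of_mem a hb)
    rcases Nat.eq_zero_or_pos r with rfl | hr
    · show me _ 0 = Wdim _ 0 _
      rw [me_zero, wdim_zero]
    have h1 : me ((starProd l).2 □ starGraph a) r ≤
        me (starProd l).2 r + a * me (starProd l).2 (r - 1) +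
        ∑ u : (starProd l).1, min (r - (starProd l).2.degree u) a :=
      me_boxProd_le hr ha
    have h2 : Wdim (starProd l).2 r (spColoring l) +
        a * Wdim (starProd l).2 (r - 1) (spColoring l) +
        (∑ u : (starProd l).1, min (r - (starProd l).2.degree u) a) ≤
        Wdim ((starProd l).2 □ starGraph a) r
          (prodColoring a (spColoring l) (freshγ (starProd l).2 (spColoring l) a)) :=
      wdim_boxProd_ge (starProd l).2 hr (spColoring l) _
    have h3 : Wdim ((starProd l).2 □ starGraph a) r
        (prodColoring a (spColoring l) (freshγ (starProd l).2 (spColoring l) a)) ≤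
        me ((starProd l).2 □ starGraph a) r :=
      wdim_le_me (prodColoring_proper (spColoring_proper l) (freshγ_inj _ _ _)
        (freshγ_avoid _ _ _))
    rw [← master l hl' r, ← master l hl' (r - 1)] at h2
    show me ((starProd l).2 □ starGraph a) r =
      Wdim ((starProd l).2 □ starGraph a) r
        (prodColoring a (spColoring l) (freshγ (starProd l).2 (spColoring l) a))
    omega

end Master

/-- Recursive formula for products of stars: with `G_{k-1}` the product of the stars in
`l` and `G_k = G_{k-1} □ S_a`, the stated recursion holds. -/
theorem star_products (r a : ℕ) (hr : 1 ≤ r) (ha : 1 ≤ a) (l : List ℕ)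
    (hl : ∀ b ∈ l, 1 ≤ b) :
    me (starProd (a :: l)).2 r =
      me (starProd l).2 r + a * me (starProd l).2 (r - 1) +
      (∑ t ∈ Finset.Icc 1 (a - 1), t * dcount (starProd l).2 ((r : ℤ) - t)) +
      a * ∑ t ∈ Finset.Icc a r, dcount (starProd l).2 ((r : ℤ) - t) := by
  classical
  have hsum := sum_min_eq (starProd l).2 r a ha
  have h1 : me ((starProd l).2 □ starGraph a) r ≤
      me (starProd l).2 r + a * me (starProd l).2 (r - 1) +
      ∑ u : (starProd l).1, min (r - (starProd l).2.degree u) a :=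
    me_boxProd_le hr ha
  have h2 : Wdim (starProd l).2 r (spColoring l) +
      a * Wdim (starProd l).2 (r - 1) (spColoring l) +
      (∑ u : (starProd l).1, min (r - (starProd l).2.degree u) a) ≤
      Wdim ((starProd l).2 □ starGraph a) r
        (prodColoring a (spColoring l) (freshγ (starProd l).2 (spColoring l) a)) :=
    wdim_boxProd_ge (starProd l).2 hr (spColoring l) _
  have h3 : Wdim ((starProd l).2 □ starGraph a) r
      (prodColoring a (spColoring l) (freshγ (starProd l).2 (spColoring l) a)) ≤
      me ((starProd l).2 □ starGraph a) r :=
    wdim_le_me (prodColoring_proper (spColoring_proper l) (freshγ_inj _ _ _)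
      (freshγ_avoid _ _ _))
  rw [← master l hl r, ← master l hl (r - 1)] at h2
  have hmain : me ((starProd l).2 □ starGraph a) r =
      me (starProd l).2 r + a * me (starProd l).2 (r - 1) +
      ∑ u : (starProd l).1, min (r - (starProd l).2.degree u) a := by
    omega
  show me ((starProd l).2 □ starGraph a) r = _
  rw [hmain, hsum]
  omega

end BondPerc
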